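/- Let T be a well-stratified tree and let T(succ) denote the suborder of nodes whose rank is a successor ordinal. Then T admits a strictly monotonic map into ℝ if and only if T(succ) admits a strictly monotonic map into ℚ. -/

import Mathlib

/-- A partial order is rooted if it has a minimum element. -/
def IsRooted (X : Type*) [PartialOrder X] : Prop := ∃ r : X, ∀ x, r ≤ x

/-- The set of predecessors of every element is linearly ordered. -/
def DownLinear (X : Type*) [PartialOrder X] : Prop :=
  ∀ x y z : X, y ≤ x → z ≤ x → y ≤ z ∨ z ≤ y

/-- A well-stratified tree: a rooted partial order in which the set of
predecessors of every element is well-ordered. -/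
def IsWSTree (T : Type*) [PartialOrder T] : Prop :=
  IsRooted T ∧ DownLinear T ∧ ∀ x : T, (Set.Iio x).IsWF

/-- In a well-stratified tree, an element has successor rank iff its set of
strict predecessors has a maximum, i.e. it has an immediate predecessor. -/
def SuccRank {T : Type*} [PartialOrder T] (x : T) : Prop :=
  ∃ y, y < x ∧ ∀ z, z < x → z ≤ y

-- key lemma for backward direction
lemma exists_succ_between {T : Type*} [PartialOrder T] (hT : IsWSTree T)
    {x x' : T} (hxx : x < x') :
    ∃ z : T, SuccRank z ∧ x < z ∧ z ≤ x' ∧ ∀ w, w < z → w ≤ x := by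
  classical
  obtain ⟨-, hDL, hWF⟩ := hT
  set S : Set T := {z | x < z ∧ z ≤ x'} with hS
  have hSwf : S.IsWF := by
    have h1 : (insert x' (Set.Iio x')).IsWF := (hWF x').insert x'
    refine h1.subset ?_
    rintro z ⟨hz1, hz2⟩
    rcases lt_or_eq_of_le hz2 with h | h
    · exact Set.mem_insert_of_mem _ h
    · exact h ▸ Set.mem_insert _ _
  have hSne : S.Nonempty := ⟨x', hxx, le_refl _⟩
  set z0 := hSwf.min hSne with hz0
  have hz0mem : z0 ∈ S := hSwf.min_mem hSne
  have hpred : ∀ w, w < z0 → w ≤ x := by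
    intro w hw
    have hwx' : w ≤ x' := le_trans hw.le hz0mem.2
    rcases hDL x' w x hwx' (le_trans hxx.le (le_refl x')) with h | h
    · exact h
    · rcases lt_or_eq_of_le h with h' | h'
      · exact absurd hw (hSwf.not_lt_min hSne ⟨h', hwx'⟩)
      · exact h' ▸ le_refl _
  exact ⟨z0, ⟨x, hz0mem.1, hpred⟩, hz0mem.1, hz0mem.2, hpred⟩

/-- A well-stratified tree admits a strictly monotonic map into ℝ iff the
suborder of nodes of successor rank admits a strictly monotonic map into ℚ. -/
theorem real_gradable_iff_succ_nodes_rat_gradable (T : Type*) [PartialOrder T]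
    (hT : IsWSTree T) :
    (∃ f : T → ℝ, StrictMono f) ↔
      ∃ g : {x : T // SuccRank x} → ℚ, StrictMono g := by
  classical
  constructor
  · rintro ⟨f, hf⟩
    -- pick immediate predecessor and a rational strictly between
    have hlt : ∀ x : {x : T // SuccRank x}, f x.2.choose < f x.1 :=
      fun x => hf x.2.choose_spec.1
    choose g hg1 hg2 using fun x : {x : T // SuccRank x} =>
      exists_rat_btwn (hlt x)
    refine ⟨g, fun a b hab => ?_⟩
    have hab' : (a : T) < b := hab
    have h1 : (a : T) ≤ b.2.choose := b.2.choose_spec.2 a hab'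
    have : (g a : ℝ) < g b :=
      lt_of_lt_of_le (hg2 a) (le_trans (hf.monotone h1) (hg1 b).le)
    exact_mod_cast this
  · rintro ⟨g, hg⟩
    set w : ℚ → ℝ := fun q => (1/2 : ℝ) ^ (Encodable.encode q) with hwdef
    have hwpos : ∀ q, 0 < w q := fun q => by positivity
    have hwsum : Summable w := by
      have := (summable_geometric_two).comp_injective
        (Encodable.encode_injective (α := ℚ))
      exact this
    set h : T → Set ℚ := fun x => g '' {z : {x : T // SuccRank x} | z.1 ≤ x}
      with hhdef
    have hmono : ∀ {x x' : T}, x ≤ x' → h x ⊆ h x' := by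
      intro x x' hxx q hq
      obtain ⟨z, hz, rfl⟩ := hq
      exact ⟨z, le_trans hz hxx, rfl⟩
    have hsum : ∀ x : T, Summable ((h x).indicator w) := fun x =>
      hwsum.of_nonneg_of_le
        (fun q => Set.indicator_nonneg (fun q _ => (hwpos q).le) q)
        (fun q => Set.indicator_le_self' (fun q _ => (hwpos q).le) q)
    refine ⟨fun x => ∑' q, (h x).indicator w q, fun x x' hxx => ?_⟩
    obtain ⟨z0, hz0succ, hz0x, hz0x', hz0pred⟩ := exists_succ_between hT hxx
    have hnew : g ⟨z0, hz0succ⟩ ∈ h x' := ⟨⟨z0, hz0succ⟩, hz0x', rfl⟩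
    have hnotold : g ⟨z0, hz0succ⟩ ∉ h x := by
      rintro ⟨z, hz, hzeq⟩
      have : z < (⟨z0, hz0succ⟩ : {x : T // SuccRank x}) :=
        Subtype.coe_lt_coe.mp (lt_of_le_of_lt hz hz0x)
      exact absurd hzeq (hg this).ne
    refine Summable.tsum_lt_tsum (i := g ⟨z0, hz0succ⟩)
      (fun q => Set.indicator_le_indicator_of_subset (hmono hxx.le)
        (fun q => (hwpos q).le) q) ?_ (hsum x) (hsum x')
    rw [Set.indicator_of_notMem hnotold, Set.indicator_of_mem hnew]
    exact hwpos _
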